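/- Let q_1,...,q_n > 0 and ℓ ∈ {1,...,n-1}. With h_{s,j} = Σ_{t ⊆ [n], |t| = ℓ, j ∉ t} (1/|(s ∪ {j}) \ t|) · Π_{a ∈ t} q_a and g_k(q) the degree-k elementary symmetric polynomial of q, the Markov transition defined by moving from a size-ℓ set s to s ∪ {j} (for j ∉ s) with probability q_j · h_{s,j} / g_{ℓ+1}(q) maps the distribution μ_ℓ on size-ℓ subsets given by μ_ℓ(s) = (Π_{a∈s} q_a)/g_ℓ(q) to the distribution μ_{ℓ+1} on size-(ℓ+1) subsets given by μ_{ℓ+1}(s') = (Π_{a∈s'} q_a)/g_{ℓ+1}(q). That is: (i) for every size-ℓ set s, Σ_{j ∉ s} q_j h_{s,j}/g_{ℓ+1}(q) = 1, and (ii) for every size-(ℓ+1) set s', Σ_{j ∈ s'} μ_ℓ(s' \ {j}) · q_j h_{s' \ {j}, j}/g_{ℓ+1}(q) = μ_{ℓ+1}(s'). -/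

import Mathlib

open Finset

/-- The elementary symmetric polynomial `g_k(q) = ∑_{|t|=k} ∏_{j∈t} q_j`. -/
def gpoly {n : ℕ} (q : Fin n → ℝ) (k : ℕ) : ℝ :=
  ∑ t ∈ Finset.univ.filter (fun t : Finset (Fin n) => t.card = k), ∏ a ∈ t, q a

/-- For `|s| = ℓ` and `j ∉ s`, the quantity
`h_{s,j} = ∑_{|t|=ℓ, j∉t} (1/|(s ∪ {j}) \ t|) ∏_{a ∈ t} q_a`. -/
noncomputable def hWeight {n : ℕ} (q : Fin n → ℝ) (ℓ : ℕ) (s : Finset (Fin n)) (j : Fin n) : ℝ :=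
  ∑ t ∈ Finset.univ.filter (fun t : Finset (Fin n) => t.card = ℓ ∧ j ∉ t),
    (1 / (((insert j s) \ t).card : ℝ)) * ∏ a ∈ t, q a

/-- The distribution `μ_k` on size-`k` subsets: `μ_k(s) = (∏_{a∈s} q_a) / g_k(q)`. -/
noncomputable def muDist {n : ℕ} (q : Fin n → ℝ) (k : ℕ) (s : Finset (Fin n)) : ℝ :=
  (∏ a ∈ s, q a) / gpoly q k

lemma gpoly_pos {n : ℕ} (q : Fin n → ℝ) (hq : ∀ j, 0 < q j) {k : ℕ} (hk : k ≤ n) :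
    0 < gpoly q k := by
  unfold gpoly
  apply Finset.sum_pos
  · intro t _
    exact Finset.prod_pos fun a _ => hq a
  · obtain ⟨t, _, ht⟩ := Finset.exists_subset_card_eq (s := (univ : Finset (Fin n))) (n := k) (by simpa using hk)
    exact ⟨t, by simp [ht]⟩

lemma card_sdiff_eq_of_card_eq {n : ℕ} {s t : Finset (Fin n)} (h : s.card = t.card) :
    (s \ t).card = (t \ s).card := by
  have h1 := Finset.card_sdiff_add_card_inter s t
  have h2 := Finset.card_sdiff_add_card_inter t s
  rw [Finset.inter_comm] at h2
  omega

lemma sdiff_nonempty_of_card_lt {n : ℕ} {s t : Finset (Fin n)} (h : t.card < s.card) :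
    (s \ t).Nonempty := by
  rw [Finset.sdiff_nonempty]
  intro hsub
  exact absurd (Finset.card_le_card hsub) (not_le.mpr h)

lemma key1 {n ℓ : ℕ} (q : Fin n → ℝ) (s : Finset (Fin n)) (hs : s.card = ℓ) :
    ∑ j ∈ sᶜ, q j * hWeight q ℓ s j = gpoly q (ℓ + 1) := by
  unfold hWeight gpoly
  have hrhs : ∀ u ∈ univ.filter (fun u : Finset (Fin n) => u.card = ℓ + 1),
      (∏ a ∈ u, q a) = ∑ j ∈ u \ s, (1 / ((u \ s).card : ℝ)) * ∏ a ∈ u, q a := by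
    intro u hu
    simp only [mem_filter] at hu
    have hne : (u \ s).Nonempty := sdiff_nonempty_of_card_lt (by omega)
    have hc : ((u \ s).card : ℝ) ≠ 0 := by
      exact_mod_cast (Finset.card_pos.mpr hne).ne'
    rw [Finset.sum_const, nsmul_eq_mul]
    field_simp
  rw [Finset.sum_congr rfl hrhs]
  simp_rw [Finset.mul_sum]
  rw [Finset.sum_sigma', Finset.sum_sigma']
  refine Finset.sum_nbij' (i := fun p => (⟨insert p.1 p.2, p.1⟩ : (_ : Finset (Fin n)) × Fin n))
    (j := fun p => (⟨p.2, p.1.erase p.2⟩ : (_ : Fin n) × Finset (Fin n)))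
    ?_ ?_ ?_ ?_ ?_
  · rintro ⟨j, t⟩ hp
    simp only [Finset.mem_sigma, Finset.mem_compl, mem_filter, mem_univ, true_and] at hp ⊢
    obtain ⟨hjs, ht, hjt⟩ := hp
    refine ⟨Finset.card_insert_of_notMem hjt ▸ by omega, ?_⟩
    exact Finset.mem_sdiff.mpr ⟨Finset.mem_insert_self _ _, hjs⟩
  · rintro ⟨u, j⟩ hp
    simp only [Finset.mem_sigma, Finset.mem_compl, mem_filter, mem_univ, true_and,
      Finset.mem_sdiff] at hp ⊢
    obtain ⟨hu, hju, hjs⟩ := hp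
    exact ⟨hjs, by rw [Finset.card_erase_of_mem hju, hu]; omega, Finset.notMem_erase _ _⟩
  · rintro ⟨j, t⟩ hp
    simp only [Finset.mem_sigma, Finset.mem_compl, mem_filter, mem_univ, true_and] at hp
    simp [Finset.erase_insert hp.2.2]
  · rintro ⟨u, j⟩ hp
    simp only [Finset.mem_sigma, mem_filter, mem_univ, true_and, Finset.mem_sdiff] at hp
    simp [Finset.insert_erase hp.2.1]
  · rintro ⟨j, t⟩ hp
    simp only [Finset.mem_sigma, Finset.mem_compl, mem_filter, mem_univ, true_and] at hp
    obtain ⟨hjs, ht, hjt⟩ := hp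
    simp only
    rw [Finset.prod_insert hjt]
    have hcard : ((insert j s \ t).card : ℝ) = ((insert j t \ s).card : ℝ) := by
      rw [Finset.insert_sdiff_of_notMem _ hjt, Finset.insert_sdiff_of_notMem _ hjs,
        Finset.card_insert_of_notMem (fun h => hjs (Finset.mem_sdiff.mp h).1),
        Finset.card_insert_of_notMem (fun h => hjt (Finset.mem_sdiff.mp h).1),
        card_sdiff_eq_of_card_eq (by rw [hs, ht])]
    rw [hcard]
    ring

lemma key2 {n ℓ : ℕ} (q : Fin n → ℝ) (s' : Finset (Fin n)) (hs' : s'.card = ℓ + 1) :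
    ∑ j ∈ s', hWeight q ℓ (s'.erase j) j = gpoly q ℓ := by
  have hstep : ∀ j ∈ s', hWeight q ℓ (s'.erase j) j =
      ∑ t ∈ univ.filter (fun t : Finset (Fin n) => t.card = ℓ),
        if j ∉ t then (1 / ((s' \ t).card : ℝ)) * ∏ a ∈ t, q a else 0 := by
    intro j hj
    unfold hWeight
    rw [← Finset.sum_filter, Finset.filter_filter]
    refine Finset.sum_congr ?_ (fun t ht => ?_)
    · ext t; simp [and_comm]
    · rw [Finset.insert_erase hj]
  rw [Finset.sum_congr rfl hstep, Finset.sum_comm]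
  unfold gpoly
  refine Finset.sum_congr rfl fun t ht => ?_
  simp only [mem_filter, mem_univ, true_and] at ht
  rw [← Finset.sum_filter, Finset.sum_const, nsmul_eq_mul, ← Finset.sdiff_eq_filter]
  have hne : (s' \ t).Nonempty := sdiff_nonempty_of_card_lt (by omega)
  have hc : ((s' \ t).card : ℝ) ≠ 0 := by exact_mod_cast (Finset.card_pos.mpr hne).ne'
  field_simp

/-- The Markov transition `s ↦ s ∪ {j}` (for `j ∉ s`) with probability
`q_j h_{s,j} / g_{ℓ+1}(q)` is a well-defined transition kernel mapping
`μ_ℓ` to `μ_{ℓ+1}`: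
(i) for every size-`ℓ` set `s`, `∑_{j∉s} q_j h_{s,j} / g_{ℓ+1}(q) = 1`;
(ii) for every size-`(ℓ+1)` set `s'`,
`∑_{j∈s'} μ_ℓ(s' \ {j}) q_j h_{s'\{j},j} / g_{ℓ+1}(q) = μ_{ℓ+1}(s')`. -/
theorem markov_transition_maps_mu (n ℓ : ℕ) (hℓ : 1 ≤ ℓ) (hℓn : ℓ + 1 ≤ n)
    (q : Fin n → ℝ) (hq : ∀ j, 0 < q j) :
    (∀ s : Finset (Fin n), s.card = ℓ →
      ∑ j ∈ sᶜ, q j * hWeight q ℓ s j / gpoly q (ℓ + 1) = 1) ∧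
    (∀ s' : Finset (Fin n), s'.card = ℓ + 1 →
      ∑ j ∈ s', muDist q ℓ (s'.erase j) * (q j * hWeight q ℓ (s'.erase j) j / gpoly q (ℓ + 1))
        = muDist q (ℓ + 1) s') := by
  have hg1 : (0:ℝ) < gpoly q (ℓ + 1) := gpoly_pos q hq hℓn
  have hg0 : (0:ℝ) < gpoly q ℓ := gpoly_pos q hq (by omega)
  constructor
  · intro s hs
    rw [← Finset.sum_div, key1 q s hs, div_self hg1.ne']
  · intro s' hs'
    have hterm : ∀ j ∈ s',
        muDist q ℓ (s'.erase j) * (q j * hWeight q ℓ (s'.erase j) j / gpoly q (ℓ + 1)) =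
        (∏ a ∈ s', q a) / (gpoly q ℓ * gpoly q (ℓ + 1)) * hWeight q ℓ (s'.erase j) j := by
      intro j hj
      unfold muDist
      rw [← Finset.mul_prod_erase s' q hj]
      field_simp
    rw [Finset.sum_congr rfl hterm, ← Finset.mul_sum, key2 q s' hs']
    unfold muDist
    field_simp
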